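/- There are no polynomials f, g ∈ ℚ[t] with deg f = 2 and deg g = 3 such that f·g divides f⁴ − 4g² + 4 in ℚ[t]. -/

import Mathlib

open Polynomial

theorem quartic_congruence_no_sol_deg2_deg3 :
    ¬ ∃ f g : ℚ[X], f.natDegree = 2 ∧ g.natDegree = 3 ∧
        f * g ∣ f ^ 4 - 4 * g ^ 2 + 4 := by
  rintro ⟨f, g, hf, hg, c, heq⟩
  -- A and B are the Sophie Germain factors of f^4 + 4
  set A : ℚ[X] := f ^ 2 + 2 * f + 2 with hA
  set B : ℚ[X] := f ^ 2 - 2 * f + 2 with hB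
  have hApos : ∀ x : ℚ, 0 < A.eval x := by
    intro x
    have : A.eval x = (f.eval x + 1) ^ 2 + 1 := by simp [hA]; ring
    nlinarith [sq_nonneg (f.eval x + 1)]
  have hBpos : ∀ x : ℚ, 0 < B.eval x := by
    intro x
    have : B.eval x = (f.eval x - 1) ^ 2 + 1 := by simp [hB]; ring
    nlinarith [sq_nonneg (f.eval x - 1)]
  have hAB : f ^ 4 + 4 = A * B := by rw [hA, hB]; ring
  have hgdvd : g ∣ f ^ 4 + 4 := ⟨f * c + 4 * g, by linear_combination heq⟩
  have hgne : g ≠ 0 := by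
    intro h; rw [h, natDegree_zero] at hg; exact three_ne_zero hg.symm
  have hnoroot : ∀ x : ℚ, (f ^ 4 + 4 : ℚ[X]).eval x ≠ 0 := by
    intro x h
    rw [hAB, eval_mul] at h
    nlinarith [hApos x, hBpos x]
  -- g has no rational roots
  have hgroots : g.roots = 0 := by
    rw [Multiset.eq_zero_iff_forall_notMem]
    intro x hx
    rw [mem_roots hgne, IsRoot.def] at hx
    obtain ⟨d, hd⟩ := hgdvd
    exact hnoroot x (by rw [hd, eval_mul, hx, zero_mul])
  have hgirr : Irreducible g :=
    (irreducible_iff_roots_eq_zero_of_degree_le_three (by omega) (by omega)).mpr hgroots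
  have hgprime : Prime g := hgirr.prime
  -- g divides A or B; in either case the quartic has a linear cofactor, hence a root
  have key : ∀ P : ℚ[X], P.natDegree = 4 → (∀ x : ℚ, 0 < P.eval x) → ¬ g ∣ P := by
    intro P hP hPpos ⟨q, hq⟩
    have hPne : P ≠ 0 := fun h => by simpa [h] using (hPpos 0).ne'
    have hqne : q ≠ 0 := fun h => hPne (by rw [hq, h, mul_zero])
    have hdeg : q.natDegree = 1 := by
      have := natDegree_mul hgne hqne
      rw [← hq, hP, hg] at this; omega
    have hq1 : q = C (q.coeff 1) * X + C (q.coeff 0) :=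
      eq_X_add_C_of_natDegree_le_one hdeg.le
    have hc1 : q.coeff 1 ≠ 0 := by
      intro h
      rw [h, map_zero, zero_mul, zero_add] at hq1
      rw [hq1, natDegree_C] at hdeg; exact one_ne_zero hdeg.symm
    have : q.eval (-(q.coeff 0) / q.coeff 1) = 0 := by
      conv_lhs => rw [hq1]
      simp
      field_simp
      ring
    have : P.eval (-(q.coeff 0) / q.coeff 1) = 0 := by
      rw [hq, eval_mul, this, mul_zero]
    exact (hPpos _).ne' this
  have hAdeg : A.natDegree = 4 := by
    have h1 : (f ^ 2).natDegree = 4 := by rw [natDegree_pow, hf]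
    have h2 : (2 * f + 2 : ℚ[X]).natDegree < 4 := by
      have := natDegree_add_le (2 * f : ℚ[X]) 2
      have h3 : (2 * f : ℚ[X]).natDegree ≤ 2 := le_trans (natDegree_mul_le) (by simp [hf])
      simp only [natDegree_ofNat] at this
      omega
    have := natDegree_add_eq_left_of_natDegree_lt (p := f ^ 2) (q := 2 * f + 2) (by omega)
    rw [hA, add_assoc]
    rw [this, h1]
  have hBdeg : B.natDegree = 4 := by
    have h1 : (f ^ 2).natDegree = 4 := by rw [natDegree_pow, hf]
    have h2 : (-(2 * f) + 2 : ℚ[X]).natDegree < 4 := by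
      have := natDegree_add_le (-(2 * f) : ℚ[X]) 2
      have h3 : (-(2 * f) : ℚ[X]).natDegree ≤ 2 := by
        rw [natDegree_neg]; exact le_trans (natDegree_mul_le) (by simp [hf])
      simp only [natDegree_ofNat] at this
      omega
    have := natDegree_add_eq_left_of_natDegree_lt (p := f ^ 2) (q := -(2 * f) + 2) (by omega)
    have hB' : B = f ^ 2 + (-(2 * f) + 2) := by rw [hB]; ring
    rw [hB', this, h1]
  rw [hAB] at hgdvd
  rcases hgprime.dvd_or_dvd hgdvd with h | h
  · exact key A hAdeg hApos h
  · exact key B hBdeg hBpos h
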